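/- arXiv:0911.3672 — 6 statements merged into one kernel-verified Lean document; each statement's English description precedes it below -/
import Mathlib

section
/- Let ω > 0 and ε > 0 with sin(ωε) ≠ 0. For any sequence (xₙ) of real numbers, the equation (x_{n+1} − 2xₙ + x_{n−1})/((2/ω)·sin(ωε/2))² + ω²·xₙ = 0 holds for all n if and only if the equation [ (x_{n+1} − xₙ·cos(ωε))·ω/sin(ωε) − (xₙ − x_{n−1}·cos(ωε))·(ω/sin(ωε))·cos(ωε) ]·ω/sin(ωε) + ω²·x_{n−1} = 0 holds for all n. -/
/-- Equivalence of two forms of the exact discrete harmonic oscillator equation: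
the form `(x_{n+1} - 2xₙ + x_{n-1})/((2/ω) sin(ωε/2))² + ω² xₙ = 0` and the form
`Δ_ε² x + ω² x = 0` with `Δ_ε = (T - cos ωε)/(ω⁻¹ sin ωε)`. -/
theorem equiv_forms_exact_discretization
    (ω ε : ℝ) (hω : 0 < ω) (hε : 0 < ε) (hs : Real.sin (ω * ε) ≠ 0)
    (x : ℤ → ℝ) :
    (∀ n : ℤ,
      (x (n + 1) - 2 * x n + x (n - 1)) / ((2 / ω) * Real.sin (ω * ε / 2)) ^ 2
        + ω ^ 2 * x n = 0) ↔
    (∀ n : ℤ,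
      ((x (n + 1) - x n * Real.cos (ω * ε)) * ω / Real.sin (ω * ε)
        - (x n - x (n - 1) * Real.cos (ω * ε)) * (ω / Real.sin (ω * ε))
            * Real.cos (ω * ε)) * ω / Real.sin (ω * ε)
        + ω ^ 2 * x (n - 1) = 0) := by
  have hω' : ω ≠ 0 := hω.ne'
  have hsq : Real.sin (ω * ε / 2) ^ 2 = (1 - Real.cos (ω * ε)) / 2 := by
    have h1 := Real.cos_sq (ω * ε / 2)
    rw [show 2 * (ω * ε / 2) = ω * ε by ring] at h1
    have hpy := Real.sin_sq_add_cos_sq (ω * ε / 2)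
    linarith
  have hs2 : Real.sin (ω * ε) ^ 2 = 1 - Real.cos (ω * ε) ^ 2 := Real.sin_sq (ω * ε)
  have hc1 : Real.cos (ω * ε) ≠ 1 := by
    intro h
    apply hs
    have : Real.sin (ω * ε) ^ 2 = 0 := by rw [hs2, h]; ring
    exact pow_eq_zero_iff (n := 2) (by norm_num) |>.mp this
  have h1c : 0 < 1 - Real.cos (ω * ε) :=
    sub_pos.mpr (lt_of_le_of_ne (Real.cos_le_one _) hc1)
  have key : ∀ n : ℤ,
      ((x (n + 1) - 2 * x n + x (n - 1)) / ((2 / ω) * Real.sin (ω * ε / 2)) ^ 2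
        + ω ^ 2 * x n = 0) ↔
      (x (n + 1) - 2 * Real.cos (ω * ε) * x n + x (n - 1) = 0) := by
    intro n
    rw [mul_pow, hsq]
    have hd : (0:ℝ) < (2 / ω) ^ 2 * ((1 - Real.cos (ω * ε)) / 2) := by
      apply mul_pos (by positivity); linarith
    rw [div_add' _ _ _ hd.ne', div_eq_zero_iff]
    constructor
    · rintro (h | h)
      · have h2 : (x (n+1) - 2 * Real.cos (ω*ε) * x n + x (n-1)) * (2 * ω ^ 2) = 0 := by
          field_simp at h
          linear_combination (2 * ω ^ 2) * h
        rcases mul_eq_zero.mp h2 with h3 | h3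
        · exact h3
        · exact absurd h3 (by positivity)
      · exact absurd h hd.ne'
    · intro h
      left
      field_simp
      linear_combination h
  have key2 : ∀ n : ℤ,
      (((x (n + 1) - x n * Real.cos (ω * ε)) * ω / Real.sin (ω * ε)
        - (x n - x (n - 1) * Real.cos (ω * ε)) * (ω / Real.sin (ω * ε))
            * Real.cos (ω * ε)) * ω / Real.sin (ω * ε)
        + ω ^ 2 * x (n - 1) = 0) ↔
      (x (n + 1) - 2 * Real.cos (ω * ε) * x n + x (n - 1) = 0) := by
    intro n
    constructor
    · intro h
      have h2 : (x (n+1) - 2 * Real.cos (ω*ε) * x n + x (n-1)) * ω^2 = 0 := by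
        field_simp at h
        linear_combination h - ω^2 * x (n-1) * hs2
      rcases mul_eq_zero.mp h2 with h3 | h3
      · exact h3
      · exact absurd h3 (by positivity)
    · intro h
      field_simp
      linear_combination ω^2 * h + ω^2 * x (n-1) * hs2
  constructor
  · intro h n; exact (key2 n).mpr ((key n).mp (h n))
  · intro h n; exact (key n).mpr ((key2 n).mp (h n))
end

section
/- Let m > 0, k > 0, ω² = k/m, ε > 0, and suppose cos(ωε/2) ≠ 0 and sin(ωε) ≠ 0. Set δ = (2/ω)·tan(ωε/2). Then real sequences (xₙ), (pₙ) satisfy the implicit midpoint-type system m·(x_{n+1} − xₙ)/δ = (p_{n+1} + pₙ)/2 and (p_{n+1} − pₙ)/δ = −k·(x_{n+1} + xₙ)/2 for all n if and only if x_{n+1} − 2·cos(ωε)·xₙ + x_{n−1} = 0 and pₙ = m·ω·(x_{n+1} − xₙ·cos(ωε))/sin(ωε) for all n. In particular this system is the exact discretization of the Hamiltonian system m·ẋ = p, ṗ = −k·x. -/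
/-- The implicit midpoint-type system
`m(x_{n+1} - xₙ)/δ = (p_{n+1} + pₙ)/2`, `(p_{n+1} - pₙ)/δ = -k(x_{n+1} + xₙ)/2`
with `δ = (2/ω) tan(ωε/2)` is equivalent to the exact discretization of the
Hamiltonian harmonic oscillator: `x_{n+1} - 2 cos(ωε) xₙ + x_{n-1} = 0` together with
`pₙ = mω (x_{n+1} - xₙ cos ωε)/sin ωε`. -/
theorem midpoint_system_iff_exact_discretization
    (m k ε ω : ℝ) (hm : 0 < m) (hk : 0 < k) (hε : 0 < ε)
    (hω : ω ^ 2 = k / m)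
    (hc : Real.cos (ω * ε / 2) ≠ 0) (hs : Real.sin (ω * ε) ≠ 0)
    (δ : ℝ) (hδ : δ = (2 / ω) * Real.tan (ω * ε / 2))
    (x p : ℤ → ℝ) :
    (∀ n : ℤ,
      m * (x (n + 1) - x n) / δ = (p (n + 1) + p n) / 2 ∧
      (p (n + 1) - p n) / δ = -(k * (x (n + 1) + x n) / 2)) ↔
    (∀ n : ℤ,
      x (n + 1) - 2 * Real.cos (ω * ε) * x n + x (n - 1) = 0 ∧
      p n = m * ω * (x (n + 1) - x n * Real.cos (ω * ε)) / Real.sin (ω * ε)) := by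
  have hm' : m ≠ 0 := ne_of_gt hm
  have hω0 : ω ≠ 0 := by
    intro h
    rw [h] at hω
    have h2 : (0:ℝ) < k / m := div_pos hk hm
    simp at hω
    nlinarith
  have hk' : k = m * ω ^ 2 := by rw [hω]; field_simp
  set sh := Real.sin (ω * ε / 2) with hshdef
  set ch := Real.cos (ω * ε / 2) with hchdef
  have hpy : sh ^ 2 + ch ^ 2 = 1 := Real.sin_sq_add_cos_sq _
  have hsin : Real.sin (ω * ε) = 2 * sh * ch := by
    rw [show ω * ε = 2 * (ω * ε / 2) by ring, Real.sin_two_mul]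
  have hcos : Real.cos (ω * ε) = 2 * ch ^ 2 - 1 := by
    rw [show ω * ε = 2 * (ω * ε / 2) by ring, Real.cos_two_mul]
  have hsh : sh ≠ 0 := by
    intro h; apply hs; rw [hsin, h]; ring
  have hδ' : δ = 2 * sh / (ω * ch) := by
    rw [hδ, Real.tan_eq_sin_div_cos, ← hshdef, ← hchdef]; field_simp
  have hδ0 : δ ≠ 0 := by
    rw [hδ']
    exact div_ne_zero (by simpa using hsh) (mul_ne_zero hω0 hc)
  have hsc : (2 : ℝ) * sh * ch ≠ 0 := by rw [← hsin]; exact hs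
  have h2sh : (2 : ℝ) * sh ≠ 0 := by simpa using hsh
  have key : ∀ j : ℤ,
      m * (x (j + 1) - x j) / δ = (p (j + 1) + p j) / 2 →
      (p (j + 1) - p j) / δ = -(k * (x (j + 1) + x j) / 2) →
      p j * (2 * sh * ch) = m * ω * (x (j + 1) - x j * (2 * ch ^ 2 - 1)) ∧
      p (j + 1) * (2 * sh * ch) = m * ω * (x (j + 1) * (2 * ch ^ 2 - 1) - x j) := by
    intro j E3 E4
    rw [hδ', div_div_eq_mul_div, div_eq_div_iff h2sh two_ne_zero] at E3
    rw [hδ', div_div_eq_mul_div, div_eq_iff h2sh] at E4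
    have A : m * ω * ch * (x (j + 1) - x j) = sh * (p (j + 1) + p j) := by
      linear_combination E3 / 2
    have B : ch * (p (j + 1) - p j) = -(m * ω * sh * (x (j + 1) + x j)) := by
      apply mul_left_cancel₀ hω0
      linear_combination E4 - sh * (x (j + 1) + x j) * hk'
    constructor
    · linear_combination (-ch) * A + (-sh) * B + m * ω * (x (j + 1) + x j) * hpy
    · linear_combination (-ch) * A + sh * B - m * ω * (x (j + 1) + x j) * hpy
  constructor
  · intro h n
    obtain ⟨A1, A2⟩ := key n (h n).1 (h n).2
    obtain ⟨B1, B2⟩ := key (n - 1) (h (n - 1)).1 (h (n - 1)).2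
    rw [show n - 1 + 1 = n by ring] at B1 B2
    constructor
    · rw [hcos]
      have hz : m * ω * (x (n + 1) - 2 * (2 * ch ^ 2 - 1) * x n + x (n - 1)) = 0 := by
        linear_combination B2 - A1
      rcases mul_eq_zero.mp hz with h' | h'
      · exact absurd h' (mul_ne_zero hm' hω0)
      · exact h'
    · rw [hsin, hcos, eq_div_iff hsc]
      linear_combination A1
  · intro h n
    obtain ⟨R2, P2⟩ := h (n + 1)
    obtain ⟨_, P1⟩ := h n
    rw [show n + 1 - 1 = n by ring] at R2
    rw [hsin] at P1 P2
    rw [hcos] at P1 P2 R2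
    rw [eq_div_iff hsc] at P1 P2
    have G1 : m * ω * ch * (x (n + 1) - x n) = sh * (p (n + 1) + p n) := by
      apply mul_left_cancel₀ hc
      linear_combination (-(1:ℝ)/2) * P1 + (-(1:ℝ)/2) * P2 - (m * ω / 2) * R2
    have G2 : ch * (p (n + 1) - p n) = -(m * ω * sh * (x (n + 1) + x n)) := by
      apply mul_left_cancel₀ hsh
      linear_combination (1/2 : ℝ) * P2 - (1/2 : ℝ) * P1 + (m * ω / 2) * R2
        + m * ω * (x (n + 1) + x n) * hpy
    constructor
    · rw [div_eq_div_iff hδ0 two_ne_zero, hδ', mul_div_assoc',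
        eq_div_iff (mul_ne_zero hω0 hc)]
      linear_combination 2 * G1
    · rw [hδ', div_div_eq_mul_div, div_eq_iff h2sh]
      linear_combination ω * G2 + sh * (x (n + 1) + x n) * hk'
end

section
/- Let ω > 0, g ∈ ℝ, and let (tₙ) be an increasing sequence of times with steps εₙ = t_{n+1} − tₙ. If x : ℝ → ℝ satisfies x''(t) + ω²·x(t) = g for all t, then the sequence xₙ := x(tₙ) satisfies sin(ωεₙ₋₁)·x_{n+1} − sin(ω(εₙ + εₙ₋₁))·xₙ + sin(ωεₙ)·x_{n−1} = (g/ω²)·(sin(ωεₙ) + sin(ωεₙ₋₁) − sin(ω(εₙ + εₙ₋₁))) for all n. -/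
lemma osc_solution (ω g : ℝ) (hω : 0 < ω) (x : ℝ → ℝ) (hx : ContDiff ℝ 2 x)
    (hode : ∀ s : ℝ, deriv (deriv x) s + ω ^ 2 * x s = g) :
    ∃ a b : ℝ, ∀ s : ℝ, x s = g / ω ^ 2 + a * Real.cos (ω * s) + b * Real.sin (ω * s) := by
  have hω0 : ω ≠ 0 := ne_of_gt hω
  have hd1 : Differentiable ℝ x := hx.differentiable (by norm_num)
  have hd2 : Differentiable ℝ (deriv x) := by
    have : ContDiff ℝ 1 (deriv x) := (contDiff_succ_iff_deriv.mp (show ContDiff ℝ (1+1) x by norm_num; exact hx)).2.2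
    exact this.differentiable (by norm_num)
  set c : ℝ → ℝ := fun s => (x s - g / ω ^ 2) * Real.cos (ω * s) - (deriv x s / ω) * Real.sin (ω * s) with hc_def
  set d : ℝ → ℝ := fun s => (x s - g / ω ^ 2) * Real.sin (ω * s) + (deriv x s / ω) * Real.cos (ω * s) with hd_def
  have hsin : ∀ s : ℝ, HasDerivAt (fun s => Real.sin (ω * s)) (Real.cos (ω * s) * ω) s := by
    intro s
    simpa using ((hasDerivAt_id s).const_mul ω).sin
  have hcos : ∀ s : ℝ, HasDerivAt (fun s => Real.cos (ω * s)) (-Real.sin (ω * s) * ω) s := by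
    intro s
    simpa using ((hasDerivAt_id s).const_mul ω).cos
  have hode2 : ∀ s : ℝ, deriv (deriv x) s = g - ω ^ 2 * x s := fun s => by linarith [hode s]
  have hc : ∀ s : ℝ, HasDerivAt c 0 s := by
    intro s
    have h1 : HasDerivAt x (deriv x s) s := (hd1 s).hasDerivAt
    have h2 : HasDerivAt (deriv x) (deriv (deriv x) s) s := (hd2 s).hasDerivAt
    have := (((h1.sub_const (g / ω ^ 2)).mul (hcos s)).sub ((h2.div_const ω).mul (hsin s)))
    refine this.congr_deriv ?_
    rw [hode2 s]
    field_simp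
    ring
  have hd : ∀ s : ℝ, HasDerivAt d 0 s := by
    intro s
    have h1 : HasDerivAt x (deriv x s) s := (hd1 s).hasDerivAt
    have h2 : HasDerivAt (deriv x) (deriv (deriv x) s) s := (hd2 s).hasDerivAt
    have := (((h1.sub_const (g / ω ^ 2)).mul (hsin s)).add ((h2.div_const ω).mul (hcos s)))
    refine this.congr_deriv ?_
    rw [hode2 s]
    field_simp
    ring
  have hcconst : ∀ s : ℝ, c s = c 0 :=
    fun s => is_const_of_deriv_eq_zero (fun u => (hc u).differentiableAt)
      (fun u => (hc u).deriv) s 0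
  have hdconst : ∀ s : ℝ, d s = d 0 :=
    fun s => is_const_of_deriv_eq_zero (fun u => (hd u).differentiableAt)
      (fun u => (hd u).deriv) s 0
  refine ⟨c 0, d 0, fun s => ?_⟩
  have key : c s * Real.cos (ω * s) + d s * Real.sin (ω * s) = x s - g / ω ^ 2 := by
    simp only [hc_def, hd_def]
    have h := Real.sin_sq_add_cos_sq (ω * s)
    linear_combination (x s - g / ω ^ 2) * h
  rw [hcconst s, hdconst s] at key
  linarith [key]

/-- Exact discretization, with variable time step `εₙ = t_{n+1} - tₙ`, of the driven
harmonic oscillator `x'' + ω²x = g`: the sampled solution `xₙ = x(tₙ)` satisfies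
`sin(ωε_{n-1}) x_{n+1} - sin(ω(εₙ + ε_{n-1})) xₙ + sin(ωεₙ) x_{n-1}
  = (g/ω²)(sin ωεₙ + sin ωε_{n-1} - sin ω(εₙ + ε_{n-1}))`. -/
theorem exact_discretization_variable_step_driven
    (ω g : ℝ) (hω : 0 < ω)
    (t : ℤ → ℝ) (ht : StrictMono t)
    (ε : ℤ → ℝ) (hε : ∀ n : ℤ, ε n = t (n + 1) - t n)
    (x : ℝ → ℝ) (hx : ContDiff ℝ 2 x)
    (hode : ∀ s : ℝ, deriv (deriv x) s + ω ^ 2 * x s = g) :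
    ∀ n : ℤ,
      Real.sin (ω * ε (n - 1)) * x (t (n + 1))
        - Real.sin (ω * (ε n + ε (n - 1))) * x (t n)
        + Real.sin (ω * ε n) * x (t (n - 1))
      = (g / ω ^ 2) * (Real.sin (ω * ε n) + Real.sin (ω * ε (n - 1))
          - Real.sin (ω * (ε n + ε (n - 1)))) := by
  obtain ⟨a, b, hsol⟩ := osc_solution ω g hω x hx hode
  intro n
  have e1 : t (n + 1) = t n + ε n := by have := hε n; linarith
  have e2 : t (n - 1) = t n - ε (n - 1) := by
    have := hε (n - 1); simp only [sub_add_cancel] at this; linarith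
  rw [e1, e2, hsol, hsol, hsol]
  simp only [mul_add, mul_sub, Real.sin_add, Real.cos_add, Real.sin_sub, Real.cos_sub]
  ring
end

section
/- Let ω > 0, g ∈ ℝ, ε > 0. If x : ℝ → ℝ satisfies x''(t) + ω²·x(t) = g for all t, then xₙ := x(nε) satisfies x_{n+1} − 2·cos(ωε)·xₙ + x_{n−1} = (4g/ω²)·sin²(ωε/2) for all n ∈ ℤ. -/
/-- Exact discretization with constant step `ε` of the driven harmonic oscillator
`x'' + ω²x = g`: the sampled solution `xₙ = x(nε)` satisfies
`x_{n+1} - 2 cos(ωε) xₙ + x_{n-1} = (4g/ω²) sin²(ωε/2)`. -/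
theorem exact_discretization_constant_step_driven
    (ω g ε : ℝ) (hω : 0 < ω) (hε : 0 < ε)
    (x : ℝ → ℝ) (hx : ContDiff ℝ 2 x)
    (hode : ∀ t : ℝ, deriv (deriv x) t + ω ^ 2 * x t = g) :
    ∀ n : ℤ,
      x (((n : ℝ) + 1) * ε) - 2 * Real.cos (ω * ε) * x ((n : ℝ) * ε)
          + x (((n : ℝ) - 1) * ε)
        = (4 * g / ω ^ 2) * Real.sin (ω * ε / 2) ^ 2 := by
  have hx' : ContDiff ℝ ((1 : ℕ∞) + 1) x := by exact_mod_cast hx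
  have hd1 : Differentiable ℝ x := hx.differentiable (by norm_num)
  have hd2 : Differentiable ℝ (deriv x) := by
    have h := (contDiff_succ_iff_deriv.mp hx').2
    exact h.2.differentiable (by simp)
  intro n
  set t : ℝ := (n : ℝ) * ε with ht
  set c : ℝ := g / ω ^ 2 with hc
  set u : ℝ → ℝ := fun s => x (t + s) + x (t - s) - 2 * c with hu
  set u1 : ℝ → ℝ := fun s => deriv x (t + s) - deriv x (t - s) with hu1
  have hadd : ∀ s : ℝ, HasDerivAt (fun y : ℝ => t + y) 1 s := fun s => by
    simpa using (hasDerivAt_id s).const_add t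
  have hsub : ∀ s : ℝ, HasDerivAt (fun y : ℝ => t - y) (-1) s := fun s => by
    simpa using (hasDerivAt_id s).const_sub t
  have hU : ∀ s, HasDerivAt u (u1 s) s := by
    intro s
    have h1 : HasDerivAt (fun s => x (t + s)) (deriv x (t + s)) s := by
      simpa [Function.comp_def] using (hd1 (t + s)).hasDerivAt.comp s (hadd s)
    have h2 : HasDerivAt (fun s => x (t - s)) (-(deriv x (t - s))) s := by
      simpa [Function.comp_def] using (hd1 (t - s)).hasDerivAt.comp s (hsub s)
    simpa [hu1, hu, sub_eq_add_neg] using ((h1.add h2).sub_const (2 * c))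
  have hU1 : ∀ s, HasDerivAt u1 (-(ω ^ 2) * u s) s := by
    intro s
    have h1 : HasDerivAt (fun s => deriv x (t + s)) (deriv (deriv x) (t + s)) s := by
      simpa [Function.comp_def] using (hd2 (t + s)).hasDerivAt.comp s (hadd s)
    have h2 : HasDerivAt (fun s => deriv x (t - s)) (-(deriv (deriv x) (t - s))) s := by
      simpa [Function.comp_def] using (hd2 (t - s)).hasDerivAt.comp s (hsub s)
    have h := h1.sub h2
    have e1 := hode (t + s)
    have e2 := hode (t - s)
    have hω2 : (ω : ℝ) ^ 2 ≠ 0 := pow_ne_zero _ hω.ne'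
    have : deriv (deriv x) (t + s) - -(deriv (deriv x) (t - s)) = -(ω ^ 2) * u s := by
      simp only [hu, hc]
      field_simp
      ring_nf
      nlinarith [e1, e2]
    rwa [this] at h
  -- Wronskians
  set W : ℝ → ℝ := fun s => u s * (ω * Real.cos (ω * s)) - u1 s * Real.sin (ω * s) with hW
  set V : ℝ → ℝ := fun s => u s * (ω * Real.sin (ω * s)) + u1 s * Real.cos (ω * s) with hV
  have hcos : ∀ s : ℝ, HasDerivAt (fun s => Real.cos (ω * s)) (-(ω * Real.sin (ω * s))) s := by
    intro s
    have := (Real.hasDerivAt_cos (ω * s)).comp s ((hasDerivAt_id s).const_mul ω)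
    simpa [mul_comm, Function.comp_def] using this
  have hsin : ∀ s : ℝ, HasDerivAt (fun s => Real.sin (ω * s)) (ω * Real.cos (ω * s)) s := by
    intro s
    have := (Real.hasDerivAt_sin (ω * s)).comp s ((hasDerivAt_id s).const_mul ω)
    simpa [mul_comm, Function.comp_def] using this
  have hWd : ∀ s, HasDerivAt W 0 s := by
    intro s
    have h := (((hU s).mul ((hsin s).const_mul ω)).sub ((hU1 s).mul (hsin s)))
    -- deriv of u * (ω * cos) : need product with cos part
    have h1 := (hU s).mul ((hcos s).const_mul ω)
    have h2 := (hU1 s).mul (hsin s)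
    have h3 := h1.sub h2
    exact h3.congr_deriv (by ring)
  have hVd : ∀ s, HasDerivAt V 0 s := by
    intro s
    have h1 := (hU s).mul ((hsin s).const_mul ω)
    have h2 := (hU1 s).mul (hcos s)
    have h3 := h1.add h2
    exact h3.congr_deriv (by ring)
  have hWc : W ε = W 0 :=
    is_const_of_deriv_eq_zero (fun s => (hWd s).differentiableAt)
      (fun s => (hWd s).deriv) ε 0
  have hVc : V ε = V 0 :=
    is_const_of_deriv_eq_zero (fun s => (hVd s).differentiableAt)
      (fun s => (hVd s).deriv) ε 0
  have hu10 : u1 0 = 0 := by simp [hu1]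
  have hW0 : W 0 = u 0 * ω := by simp [hW, hu10]
  have hV0 : V 0 = 0 := by simp [hV, hu10]
  have hpyth : Real.sin (ω * ε) ^ 2 + Real.cos (ω * ε) ^ 2 = 1 := Real.sin_sq_add_cos_sq _
  have key : u ε * ω = u 0 * ω * Real.cos (ω * ε) := by
    have hcomb : u ε * ω = W ε * Real.cos (ω * ε) + V ε * Real.sin (ω * ε) := by
      simp only [hW, hV]
      linear_combination (-(u ε * ω)) * hpyth
    rw [hcomb, hWc, hVc, hW0, hV0]
    ring
  have key' : u ε = u 0 * Real.cos (ω * ε) :=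
    mul_right_cancel₀ hω.ne' (by linarith [key])
  -- unfold u
  have e1 : ((n : ℝ) + 1) * ε = t + ε := by rw [ht]; ring
  have e2 : ((n : ℝ) - 1) * ε = t - ε := by rw [ht]; ring
  have e3 : (n : ℝ) * ε = t := rfl
  rw [e1, e2]
  have hhalf : Real.sin (ω * ε / 2) ^ 2 = 1 / 2 - Real.cos (ω * ε) / 2 := by
    have h1 := Real.cos_two_mul (ω * ε / 2)
    have h2 := Real.sin_sq_add_cos_sq (ω * ε / 2)
    have h3 : 2 * (ω * ε / 2) = ω * ε := by ring
    rw [h3] at h1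
    linarith
  have huε : u ε = x (t + ε) + x (t - ε) - 2 * c := rfl
  have hu0 : u 0 = x t + x t - 2 * c := by simp [hu]
  have hω2 : (ω : ℝ) ^ 2 ≠ 0 := pow_ne_zero _ hω.ne'
  rw [hhalf]
  have : x (t + ε) + x (t - ε) - 2 * c = (x t + x t - 2 * c) * Real.cos (ω * ε) := by
    rw [← huε, ← hu0]; exact key'
  rw [hc] at this
  field_simp at this ⊢
  nlinarith [this]
end

section
/- Let Ω be a symmetric real N×N matrix, ε > 0, and suppose the matrix S := Ω⁻¹sin(Ωε) (given by the entire series ∑_{k≥0} (−1)^k ε^{2k+1}/(2k+1)!·(Ω²)^k) is invertible. Let (xₙ) be a sequence in ℝᴺ satisfying x_{n+1} − 2·cos(Ωε)·xₙ + x_{n−1} = 0 (with cos(Ωε) = ∑_{k≥0} (−1)^k ε^{2k}/(2k)!·(Ω²)^k), and define vₙ := S⁻¹·(x_{n+1} − cos(Ωε)·xₙ). Then the quantity Iₙ := ½·|vₙ|² + ½·⟨xₙ, Ω²·xₙ⟩ satisfies I_{n+1} = Iₙ for all n, where ⟨·,·⟩ is the Euclidean inner product on ℝᴺ and |v|² =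 ⟨v, v⟩. -/
open Matrix

/-- The entire matrix power series `cos(Ωε)` in `Ω²`. -/
noncomputable def matCos {N : ℕ} (M : Matrix (Fin N) (Fin N) ℝ) (ε : ℝ) :
    Matrix (Fin N) (Fin N) ℝ :=
  ∑' k : ℕ, (((-1 : ℝ) ^ k * ε ^ (2 * k)) / (Nat.factorial (2 * k) : ℝ)) • M ^ k

/-- The entire matrix power series `Ω⁻¹ sin(Ωε)` in `Ω²`. -/
noncomputable def matSin {N : ℕ} (M : Matrix (Fin N) (Fin N) ℝ) (ε : ℝ) :
    Matrix (Fin N) (Fin N) ℝ :=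
  ∑' k : ℕ, (((-1 : ℝ) ^ k * ε ^ (2 * k + 1)) / (Nat.factorial (2 * k + 1) : ℝ)) • M ^ k

namespace DiscreteOsc

open Finset

noncomputable def cosCoef (ε : ℝ) (k : ℕ) : ℝ :=
  ((-1 : ℝ) ^ k * ε ^ (2 * k)) / (Nat.factorial (2 * k) : ℝ)
noncomputable def sinCoef (ε : ℝ) (k : ℕ) : ℝ :=
  ((-1 : ℝ) ^ k * ε ^ (2 * k + 1)) / (Nat.factorial (2 * k + 1) : ℝ)

def shiftCoef (c : ℕ → ℝ) : ℕ → ℝ := fun n => Nat.rec 0 (fun k _ => c k) n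
@[simp] lemma shiftCoef_zero (c : ℕ → ℝ) : shiftCoef c 0 = 0 := rfl
@[simp] lemma shiftCoef_succ (c : ℕ → ℝ) (n : ℕ) : shiftCoef c (n + 1) = c n := rfl

variable {N : ℕ}

noncomputable def entB (M : Matrix (Fin N) (Fin N) ℝ) : ℝ := ∑ i, ∑ j, |M i j|

lemma entB_nonneg (M : Matrix (Fin N) (Fin N) ℝ) : 0 ≤ entB M := by
  apply Finset.sum_nonneg; intro i _; apply Finset.sum_nonneg; intro j _; exact abs_nonneg _

lemma col_le_entB (M : Matrix (Fin N) (Fin N) ℝ) (j : Fin N) : ∑ l, |M l j| ≤ entB M := by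
  rw [entB, Finset.sum_comm]
  apply Finset.single_le_sum (f := fun j => ∑ l, |M l j|)
    (fun j _ => Finset.sum_nonneg fun l _ => abs_nonneg _) (Finset.mem_univ j)

lemma entry_pow_bound (M : Matrix (Fin N) (Fin N) ℝ) (k : ℕ) (i j : Fin N) :
    |(M ^ k) i j| ≤ (entB M) ^ k := by
  induction k generalizing i j with
  | zero =>
    simp [Matrix.one_apply]
    split <;> simp
  | succ k ih =>
    have : (M ^ (k+1)) i j = ∑ l, (M ^ k) i l * M l j := by
      rw [pow_succ, Matrix.mul_apply]
    rw [this, pow_succ]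
    calc |∑ l, (M ^ k) i l * M l j| ≤ ∑ l, |(M ^ k) i l * M l j| := Finset.abs_sum_le_sum_abs _ _
      _ ≤ ∑ l, entB M ^ k * |M l j| := by
          apply Finset.sum_le_sum; intro l _
          rw [abs_mul]
          exact mul_le_mul_of_nonneg_right (ih i l) (abs_nonneg _)
      _ = entB M ^ k * ∑ l, |M l j| := by rw [Finset.mul_sum]
      _ ≤ entB M ^ k * entB M :=
          mul_le_mul_of_nonneg_left (col_le_entB M j) (pow_nonneg (entB_nonneg M) k)

section Series
variable (M : Matrix (Fin N) (Fin N) ℝ) (c d : ℕ → ℝ)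

lemma summable_entry (hc : Summable fun k => |c k| * entB M ^ k) (i j : Fin N) :
    Summable fun k => ‖c k * (M ^ k) i j‖ := by
  apply Summable.of_nonneg_of_le (fun k => norm_nonneg _) _ hc
  intro k
  rw [Real.norm_eq_abs, abs_mul]
  exact mul_le_mul_of_nonneg_left (entry_pow_bound M k i j) (abs_nonneg _)

lemma hasSum_series (hc : Summable fun k => |c k| * entB M ^ k) :
    HasSum (fun k => c k • M ^ k) (fun i j => ∑' k, c k * (M ^ k) i j) := by
  refine Pi.hasSum.mpr ?_
  intro i
  rw [Pi.hasSum]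
  intro j
  have := ((summable_entry M c hc i j).of_norm).hasSum
  simpa using this

lemma summable_cauchy (hc : Summable fun k => |c k| * entB M ^ k)
    (hd : Summable fun k => |d k| * entB M ^ k) :
    Summable fun n => |∑ kl ∈ Finset.HasAntidiagonal.antidiagonal n, c kl.1 * d kl.2| * entB M ^ n := by
  have hcn : Summable fun k => ‖|c k| * entB M ^ k‖ := by
    apply hc.abs.congr
    intro k
    rw [Real.norm_eq_abs]
  have hdn : Summable fun k => ‖|d k| * entB M ^ k‖ := by
    apply hd.abs.congr
    intro k
    rw [Real.norm_eq_abs]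
  have key := summable_norm_sum_mul_antidiagonal_of_summable_norm
    (f := fun k => |c k| * entB M ^ k) (g := fun k => |d k| * entB M ^ k) hcn hdn
  apply Summable.of_nonneg_of_le
    (fun n => mul_nonneg (abs_nonneg _) (pow_nonneg (entB_nonneg M) n)) _ key
  intro n
  rw [Real.norm_eq_abs]
  have h1 : |∑ kl ∈ Finset.HasAntidiagonal.antidiagonal n, c kl.1 * d kl.2| * entB M ^ n
      ≤ ∑ kl ∈ Finset.HasAntidiagonal.antidiagonal n, (|c kl.1| * entB M ^ kl.1) * (|d kl.2| * entB M ^ kl.2) := by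
    calc |∑ kl ∈ Finset.HasAntidiagonal.antidiagonal n, c kl.1 * d kl.2| * entB M ^ n
        ≤ (∑ kl ∈ Finset.HasAntidiagonal.antidiagonal n, |c kl.1 * d kl.2|) * entB M ^ n := by
          apply mul_le_mul_of_nonneg_right (Finset.abs_sum_le_sum_abs _ _)
            (pow_nonneg (entB_nonneg M) n)
      _ = ∑ kl ∈ Finset.HasAntidiagonal.antidiagonal n, (|c kl.1| * entB M ^ kl.1) * (|d kl.2| * entB M ^ kl.2) := by
          rw [Finset.sum_mul]
          apply Finset.sum_congr rfl
          intro kl hkl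
          rw [Finset.HasAntidiagonal.mem_antidiagonal] at hkl
          rw [abs_mul, ← hkl, pow_add]
          ring
  exact h1.trans (le_abs_self _)

lemma seriesMul (hc : Summable fun k => |c k| * entB M ^ k)
    (hd : Summable fun k => |d k| * entB M ^ k) :
    (∑' k, c k • M ^ k) * (∑' k, d k • M ^ k)
      = ∑' n, (∑ kl ∈ Finset.HasAntidiagonal.antidiagonal n, c kl.1 * d kl.2) • M ^ n := by
  rw [(hasSum_series M c hc).tsum_eq, (hasSum_series M d hd).tsum_eq,
      (hasSum_series M _ (summable_cauchy M c d hc hd)).tsum_eq]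
  ext i j
  change ∑ l, (∑' k, c k * (M ^ k) i l) * (∑' k, d k * (M ^ k) l j) = _
  have hstep : ∀ l : Fin N,
      (∑' k, c k * (M ^ k) i l) * (∑' k, d k * (M ^ k) l j)
        = ∑' n, ∑ kl ∈ Finset.HasAntidiagonal.antidiagonal n,
            (c kl.1 * (M ^ kl.1) i l) * (d kl.2 * (M ^ kl.2) l j) :=
    fun l => tsum_mul_tsum_eq_tsum_sum_antidiagonal_of_summable_norm
      (summable_entry M c hc i l) (summable_entry M d hd l j)
  calc ∑ l, (∑' k, c k * (M ^ k) i l) * (∑' k, d k * (M ^ k) l j)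
      = ∑ l, ∑' n, ∑ kl ∈ Finset.HasAntidiagonal.antidiagonal n,
          (c kl.1 * (M ^ kl.1) i l) * (d kl.2 * (M ^ kl.2) l j) :=
        Finset.sum_congr rfl fun l _ => hstep l
    _ = ∑' n, ∑ l, ∑ kl ∈ Finset.HasAntidiagonal.antidiagonal n,
          (c kl.1 * (M ^ kl.1) i l) * (d kl.2 * (M ^ kl.2) l j) := by
        refine (Summable.tsum_finsetSum ?_).symm
        intro l _
        exact ((summable_norm_sum_mul_antidiagonal_of_summable_norm
          (summable_entry M c hc i l) (summable_entry M d hd l j)).of_norm)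
    _ = ∑' n, (∑ kl ∈ Finset.HasAntidiagonal.antidiagonal n, c kl.1 * d kl.2) * (M ^ n) i j := by
        apply tsum_congr
        intro n
        rw [Finset.sum_comm, Finset.sum_mul]
        apply Finset.sum_congr rfl
        intro kl hkl
        rw [Finset.HasAntidiagonal.mem_antidiagonal] at hkl
        have : (M ^ n) i j = ∑ l, (M ^ kl.1) i l * (M ^ kl.2) l j := by
          rw [← Matrix.mul_apply, ← pow_add, hkl]
        rw [this, Finset.mul_sum]
        apply Finset.sum_congr rfl
        intro l _
        ring

lemma summable_shift (hc : Summable fun k => |c k| * entB M ^ k) :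
    Summable fun n => |shiftCoef c n| * entB M ^ n := by
  rw [← summable_nat_add_iff 1]
  apply ((hc.mul_left (entB M)).congr _)
  intro n
  simp [pow_succ]
  ring

lemma seriesShift (hc : Summable fun k => |c k| * entB M ^ k) :
    M * (∑' k, c k • M ^ k) = ∑' n, shiftCoef c n • M ^ n := by
  have h1 : M * (∑' k, c k • M ^ k) = ∑' k, c k • M ^ (k + 1) := by
    rw [← (hasSum_series M c hc).summable.tsum_mul_left M]
    apply tsum_congr
    intro k
    rw [mul_smul_comm, ← pow_succ']
  rw [h1, Summable.tsum_eq_zero_add (hasSum_series M (shiftCoef c) (summable_shift M c hc)).summable]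
  simp

lemma seriesComm (hc : Summable fun k => |c k| * entB M ^ k)
    (hd : Summable fun k => |d k| * entB M ^ k) :
    (∑' k, c k • M ^ k) * (∑' k, d k • M ^ k)
      = (∑' k, d k • M ^ k) * (∑' k, c k • M ^ k) := by
  rw [seriesMul M c d hc hd, seriesMul M d c hd hc]
  apply tsum_congr
  intro n
  congr 1
  rw [← Finset.Nat.sum_antidiagonal_swap (f := fun kl => c kl.1 * d kl.2)]
  apply Finset.sum_congr rfl
  intro kl _
  simp [Prod.swap, mul_comm]

lemma seriesCommMatrix (hc : Summable fun k => |c k| * entB M ^ k) :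
    M * (∑' k, c k • M ^ k) = (∑' k, c k • M ^ k) * M := by
  have hs := (hasSum_series M c hc).summable
  rw [← hs.tsum_mul_left M, ← hs.tsum_mul_right M]
  apply tsum_congr
  intro k
  rw [mul_smul_comm, smul_mul_assoc, ← pow_succ', ← pow_succ]

end Series

lemma summable_cosCoef (M : Matrix (Fin N) (Fin N) ℝ) (ε : ℝ) :
    Summable fun k => |cosCoef ε k| * entB M ^ k := by
  apply Summable.of_nonneg_of_le
    (fun k => mul_nonneg (abs_nonneg _) (pow_nonneg (entB_nonneg M) k))
    _ (Real.summable_pow_div_factorial (ε ^ 2 * entB M))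
  intro k
  have hr : (ε ^ 2 * entB M) ^ k / (k.factorial : ℝ)
      = |ε| ^ (2 * k) * entB M ^ k / (k.factorial : ℝ) := by
    rw [mul_pow, ← sq_abs, ← pow_mul]
  rw [hr]
  have habs : |cosCoef ε k| = |ε| ^ (2 * k) / ((2 * k).factorial : ℝ) := by
    rw [cosCoef, abs_div, abs_mul, abs_pow, abs_pow, abs_neg, abs_one, one_pow, one_mul,
        Nat.abs_cast]
  rw [habs, div_mul_eq_mul_div]
  gcongr
  · exact mul_nonneg (pow_nonneg (abs_nonneg _) _) (pow_nonneg (entB_nonneg M) k)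
  · omega

lemma summable_sinCoef (M : Matrix (Fin N) (Fin N) ℝ) (ε : ℝ) :
    Summable fun k => |sinCoef ε k| * entB M ^ k := by
  apply Summable.of_nonneg_of_le
    (fun k => mul_nonneg (abs_nonneg _) (pow_nonneg (entB_nonneg M) k))
    _ ((Real.summable_pow_div_factorial (ε ^ 2 * entB M)).mul_left |ε|)
  intro k
  have hr : |ε| * ((ε ^ 2 * entB M) ^ k / (k.factorial : ℝ))
      = |ε| ^ (2 * k + 1) * entB M ^ k / (k.factorial : ℝ) := by
    rw [mul_pow, ← sq_abs, ← pow_mul, pow_succ]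
    ring
  rw [hr]
  have habs : |sinCoef ε k| = |ε| ^ (2 * k + 1) / ((2 * k + 1).factorial : ℝ) := by
    rw [sinCoef, abs_div, abs_mul, abs_pow, abs_pow, abs_neg, abs_one, one_pow, one_mul,
        Nat.abs_cast]
  rw [habs, div_mul_eq_mul_div]
  gcongr
  · exact mul_nonneg (pow_nonneg (abs_nonneg _) _) (pow_nonneg (entB_nonneg M) k)
  · omega

lemma sum_range_even_odd {A : Type*} [AddCommMonoid A] (f : ℕ → A) (n : ℕ) :
    ∑ j ∈ range (2 * n + 1), f j
      = ∑ k ∈ range (n + 1), f (2 * k) + ∑ k ∈ range n, f (2 * k + 1) := by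
  induction n with
  | zero => simp
  | succ n ih =>
    have h1 : 2 * (n + 1) + 1 = (2 * n + 1) + 1 + 1 := by ring
    rw [h1, Finset.sum_range_succ, Finset.sum_range_succ, ih,
        Finset.sum_range_succ (fun k => f (2 * k)) (n + 1),
        Finset.sum_range_succ (fun k => f (2 * k + 1)) n]
    have e1 : 2 * n + 1 + 1 = 2 * (n + 1) := by ring
    rw [e1]
    abel

lemma even_odd_choose (n : ℕ) (hn : 1 ≤ n) :
    (∑ k ∈ range (n + 1), ((2 * n).choose (2 * k) : ℝ))
      = ∑ k ∈ range n, ((2 * n).choose (2 * k + 1) : ℝ) := by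
  have h0 : (∑ i ∈ range (2 * n + 1), (-1 : ℝ) ^ i * ((2 * n).choose i : ℝ)) = 0 := by
    have := Int.alternating_sum_range_choose (n := 2 * n)
    have h2 : 2 * n ≠ 0 := by omega
    rw [if_neg h2] at this
    have := congrArg (fun z : ℤ => (z : ℝ)) this
    push_cast at this
    simpa using this
  rw [sum_range_even_odd (fun i => (-1 : ℝ) ^ i * ((2 * n).choose i : ℝ))] at h0
  have he : ∀ k, (-1 : ℝ) ^ (2 * k) * ((2 * n).choose (2 * k) : ℝ)
      = ((2 * n).choose (2 * k) : ℝ) := by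
    intro k; rw [pow_mul]; norm_num
  have ho : ∀ k, (-1 : ℝ) ^ (2 * k + 1) * ((2 * n).choose (2 * k + 1) : ℝ)
      = -((2 * n).choose (2 * k + 1) : ℝ) := by
    intro k; rw [pow_succ, pow_mul]; norm_num
  simp only [he, ho, Finset.sum_neg_distrib] at h0
  linarith

lemma coef_id (ε : ℝ) (n : ℕ) :
    (∑ kl ∈ Finset.HasAntidiagonal.antidiagonal n, cosCoef ε kl.1 * cosCoef ε kl.2)
      + shiftCoef (fun m => ∑ kl ∈ Finset.HasAntidiagonal.antidiagonal m, sinCoef ε kl.1 * sinCoef ε kl.2) n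
      = if n = 0 then 1 else 0 := by
  cases n with
  | zero =>
    simp [cosCoef]
  | succ m =>
    rw [if_neg (Nat.succ_ne_zero m), shiftCoef_succ]
    set n := m + 1 with hn
    rw [Finset.Nat.sum_antidiagonal_eq_sum_range_succ_mk,
        Finset.Nat.sum_antidiagonal_eq_sum_range_succ_mk]
    have hcos : ∀ k ∈ range (n + 1),
        cosCoef ε k * cosCoef ε (n - k)
          = ((-1 : ℝ) ^ n * ε ^ (2 * n) / (Nat.factorial (2 * n) : ℝ))
              * ((2 * n).choose (2 * k) : ℝ) := by
      intro k hk
      rw [Finset.mem_range] at hk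
      have hkn : k ≤ n := by omega
      have h2 : 2 * k ≤ 2 * n := by omega
      have hsub : 2 * (n - k) = 2 * n - 2 * k := by omega
      rw [cosCoef, cosCoef, Nat.cast_choose ℝ h2, hsub]
      have hsign : (-1 : ℝ) ^ k * (-1 : ℝ) ^ (n - k) = (-1 : ℝ) ^ n := by
        rw [← pow_add]; congr 1; omega
      have hpow : ε ^ (2 * k) * ε ^ (2 * n - 2 * k) = ε ^ (2 * n) := by
        rw [← pow_add]; congr 1; omega
      have f1 : ((2 * k).factorial : ℝ) ≠ 0 := Nat.cast_ne_zero.mpr (Nat.factorial_ne_zero _)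
      have f2 : ((2 * n - 2 * k).factorial : ℝ) ≠ 0 :=
        Nat.cast_ne_zero.mpr (Nat.factorial_ne_zero _)
      have f3 : ((2 * n).factorial : ℝ) ≠ 0 := Nat.cast_ne_zero.mpr (Nat.factorial_ne_zero _)
      field_simp
      rw [← hsign, ← hpow]
      ring
    have hsin : ∀ k ∈ range (m + 1),
        sinCoef ε k * sinCoef ε (m - k)
          = -(((-1 : ℝ) ^ n * ε ^ (2 * n) / (Nat.factorial (2 * n) : ℝ))
              * ((2 * n).choose (2 * k + 1) : ℝ)) := by
      intro k hk
      rw [Finset.mem_range] at hk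
      have hkm : k ≤ m := by omega
      have h2 : 2 * k + 1 ≤ 2 * n := by omega
      have hsub : 2 * (m - k) + 1 = 2 * n - (2 * k + 1) := by omega
      rw [sinCoef, sinCoef, Nat.cast_choose ℝ h2, hsub]
      have hsign : (-1 : ℝ) ^ k * (-1 : ℝ) ^ (m - k) = -(-1 : ℝ) ^ n := by
        have h3 : (-1 : ℝ) ^ k * (-1 : ℝ) ^ (m - k) = (-1 : ℝ) ^ m := by
          rw [← pow_add]; congr 1; omega
        rw [h3, hn, pow_succ]; ring
      have hpow : ε ^ (2 * k + 1) * ε ^ (2 * n - (2 * k + 1)) = ε ^ (2 * n) := by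
        rw [← pow_add]; congr 1; omega
      have f1 : ((2 * k + 1).factorial : ℝ) ≠ 0 := Nat.cast_ne_zero.mpr (Nat.factorial_ne_zero _)
      have f2 : ((2 * n - (2 * k + 1)).factorial : ℝ) ≠ 0 :=
        Nat.cast_ne_zero.mpr (Nat.factorial_ne_zero _)
      have f3 : ((2 * n).factorial : ℝ) ≠ 0 := Nat.cast_ne_zero.mpr (Nat.factorial_ne_zero _)
      field_simp
      rw [← hpow]
      linear_combination ε ^ (2 * k + 1) * ε ^ (2 * n - (2 * k + 1)) * hsign
    rw [Finset.sum_congr rfl hcos, Finset.sum_congr rfl hsin,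
        ← Finset.mul_sum, Finset.sum_neg_distrib, ← Finset.mul_sum]
    have hEO : (∑ k ∈ range (n + 1), ((2 * n).choose (2 * k) : ℝ))
        = ∑ k ∈ range (m + 1), ((2 * n).choose (2 * k + 1) : ℝ) := by
      simpa [hn] using even_odd_choose n (by omega)
    rw [hEO]
    ring

section Main
variable (M : Matrix (Fin N) (Fin N) ℝ) (ε : ℝ)

lemma matCos_eq : matCos M ε = ∑' k, cosCoef ε k • M ^ k := rfl
lemma matSin_eq : matSin M ε = ∑' k, sinCoef ε k • M ^ k := rfl

/-- The fundamental identity `cos² + Ω² (Ω⁻¹ sin)² = 1`. -/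
lemma cos_sq_add_sin_sq :
    matCos M ε * matCos M ε + M * (matSin M ε * matSin M ε) = 1 := by
  have hc := summable_cosCoef M ε
  have hs := summable_sinCoef M ε
  rw [matCos_eq, matSin_eq, seriesMul M _ _ hc hc, seriesMul M _ _ hs hs,
      seriesShift M _ (summable_cauchy M _ _ hs hs),
      ← Summable.tsum_add (hasSum_series M _ (summable_cauchy M _ _ hc hc)).summable
        (hasSum_series M _ (summable_shift M _ (summable_cauchy M _ _ hs hs))).summable]
  have key : ∀ n : ℕ,
      (∑ kl ∈ Finset.HasAntidiagonal.antidiagonal n, cosCoef ε kl.1 * cosCoef ε kl.2) • M ^ n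
        + shiftCoef (fun m => ∑ kl ∈ Finset.HasAntidiagonal.antidiagonal m, sinCoef ε kl.1 * sinCoef ε kl.2) n
            • M ^ n
      = if n = 0 then (1 : Matrix (Fin N) (Fin N) ℝ) else 0 := by
    intro n
    rw [← add_smul, coef_id]
    cases n with
    | zero => simp
    | succ m => simp
  rw [tsum_congr key]
  exact tsum_ite_eq (0 : ℕ) (fun _ => (1 : Matrix (Fin N) (Fin N) ℝ))

lemma matCos_comm_matSin : matCos M ε * matSin M ε = matSin M ε * matCos M ε := by
  rw [matCos_eq, matSin_eq]
  exact seriesComm M _ _ (summable_cosCoef M ε) (summable_sinCoef M ε)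

lemma matCos_comm_M : M * matCos M ε = matCos M ε * M :=
  seriesCommMatrix M _ (summable_cosCoef M ε)

lemma matSin_comm_M : M * matSin M ε = matSin M ε * M :=
  seriesCommMatrix M _ (summable_sinCoef M ε)

lemma matCos_symm (hM : Mᵀ = M) : (matCos M ε)ᵀ = matCos M ε := by
  rw [matCos_eq, (hasSum_series M _ (summable_cosCoef M ε)).tsum_eq]
  ext i j
  change ∑' k, cosCoef ε k * (M ^ k) j i = ∑' k, cosCoef ε k * (M ^ k) i j
  apply tsum_congr
  intro k
  have hMk : (M ^ k)ᵀ = M ^ k := by rw [Matrix.transpose_pow, hM]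
  have : (M ^ k) j i = (M ^ k) i j := by
    conv_lhs => rw [← hMk]
    rw [Matrix.transpose_apply]
  rw [this]

lemma matSin_symm (hM : Mᵀ = M) : (matSin M ε)ᵀ = matSin M ε := by
  rw [matSin_eq, (hasSum_series M _ (summable_sinCoef M ε)).tsum_eq]
  ext i j
  change ∑' k, sinCoef ε k * (M ^ k) j i = ∑' k, sinCoef ε k * (M ^ k) i j
  apply tsum_congr
  intro k
  have hMk : (M ^ k)ᵀ = M ^ k := by rw [Matrix.transpose_pow, hM]
  have : (M ^ k) j i = (M ^ k) i j := by
    conv_lhs => rw [← hMk]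
    rw [Matrix.transpose_apply]
  rw [this]

end Main

lemma adj (P : Matrix (Fin N) (Fin N) ℝ) (hP : Pᵀ = P) (u w : Fin N → ℝ) :
    P.mulVec u ⬝ᵥ w = u ⬝ᵥ P.mulVec w := by
  rw [Matrix.dotProduct_mulVec, ← Matrix.mulVec_transpose, hP]

lemma expand_quad (A C : Matrix (Fin N) (Fin N) ℝ) (hAt : Aᵀ = A) (hCt : Cᵀ = C)
    (hcomm : C * (A * A) = (A * A) * C) (u w : Fin N → ℝ) :
    A.mulVec (C.mulVec u - w) ⬝ᵥ A.mulVec (C.mulVec u - w)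
      = u ⬝ᵥ (C * (A * A) * C).mulVec u - u ⬝ᵥ (C * (A * A)).mulVec w
        - w ⬝ᵥ (C * (A * A)).mulVec u + w ⬝ᵥ (A * A).mulVec w := by
  have step1 : ∀ r : Fin N → ℝ, A.mulVec r ⬝ᵥ A.mulVec r = r ⬝ᵥ (A * A).mulVec r := by
    intro r
    rw [adj A hAt r (A.mulVec r), Matrix.mulVec_mulVec]
  rw [step1, Matrix.mulVec_sub, sub_dotProduct, dotProduct_sub,
      dotProduct_sub]
  have t1 : C.mulVec u ⬝ᵥ (A * A).mulVec (C.mulVec u)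
      = u ⬝ᵥ (C * (A * A) * C).mulVec u := by
    rw [adj C hCt, Matrix.mulVec_mulVec, Matrix.mulVec_mulVec]
  have t2 : C.mulVec u ⬝ᵥ (A * A).mulVec w = u ⬝ᵥ (C * (A * A)).mulVec w := by
    rw [adj C hCt, Matrix.mulVec_mulVec]
  have t3 : w ⬝ᵥ (A * A).mulVec (C.mulVec u) = w ⬝ᵥ (C * (A * A)).mulVec u := by
    rw [Matrix.mulVec_mulVec, ← hcomm]
  rw [t1, t2, t3]
  ring

end DiscreteOsc

open DiscreteOsc in
/-- Energy conservation for the exact discretization of the multidimensional harmonic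
oscillator: if `Ω` is symmetric, `S = Ω⁻¹ sin(Ωε)` invertible,
`x_{n+1} - 2 cos(Ωε) xₙ + x_{n-1} = 0` and `vₙ = S⁻¹(x_{n+1} - cos(Ωε) xₙ)`, then
`Iₙ = ½|vₙ|² + ½⟨xₙ, Ω²xₙ⟩` satisfies `I_{n+1} = Iₙ`. -/
theorem discrete_energy_multidimensional_oscillator
    {N : ℕ} (Ω : Matrix (Fin N) (Fin N) ℝ) (hΩ : Ωᵀ = Ω)
    (ε : ℝ) (hε : 0 < ε)
    (hS : IsUnit (matSin (Ω ^ 2) ε))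
    (x v : ℤ → (Fin N → ℝ))
    (hrec : ∀ n : ℤ,
      x (n + 1) - (2 : ℝ) • (matCos (Ω ^ 2) ε).mulVec (x n) + x (n - 1) = 0)
    (hv : ∀ n : ℤ,
      v n = (matSin (Ω ^ 2) ε)⁻¹.mulVec (x (n + 1) - (matCos (Ω ^ 2) ε).mulVec (x n))) :
    ∀ n : ℤ,
      (1 / 2 : ℝ) * (v (n + 1) ⬝ᵥ v (n + 1))
          + (1 / 2 : ℝ) * (x (n + 1) ⬝ᵥ (Ω ^ 2).mulVec (x (n + 1)))
        = (1 / 2 : ℝ) * (v n ⬝ᵥ v n)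
          + (1 / 2 : ℝ) * (x n ⬝ᵥ (Ω ^ 2).mulVec (x n)) := by
  intro n
  set M : Matrix (Fin N) (Fin N) ℝ := Ω ^ 2 with hM
  set C : Matrix (Fin N) (Fin N) ℝ := matCos M ε with hC
  set S : Matrix (Fin N) (Fin N) ℝ := matSin M ε with hSdef
  set A : Matrix (Fin N) (Fin N) ℝ := S⁻¹ with hA
  have hMt : Mᵀ = M := by rw [hM, Matrix.transpose_pow, hΩ]
  have hCt : Cᵀ = C := matCos_symm M ε hMt
  have hSt : Sᵀ = S := matSin_symm M ε hMt
  have hdet : IsUnit S.det := (Matrix.isUnit_iff_isUnit_det S).mp hS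
  have hSA : S * A = 1 := Matrix.mul_nonsing_inv S hdet
  have hAS : A * S = 1 := Matrix.nonsing_inv_mul S hdet
  have hAt : Aᵀ = A := by rw [hA, Matrix.transpose_nonsing_inv, hSt]
  have hCS : C * S = S * C := matCos_comm_matSin M ε
  have hid : C * C + M * (S * S) = 1 := cos_sq_add_sin_sq M ε
  have hCA : C * A = A * C := by
    calc C * A = (A * S) * (C * A) := by rw [hAS, one_mul]
      _ = A * (S * C) * A := by simp only [mul_assoc]
      _ = A * (C * S) * A := by rw [hCS]
      _ = (A * C) * (S * A) := by simp only [mul_assoc]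
      _ = A * C := by rw [hSA, mul_one]
  have hcomm : C * (A * A) = (A * A) * C := by
    calc C * (A * A) = (C * A) * A := (mul_assoc C A A).symm
      _ = (A * C) * A := by rw [hCA]
      _ = A * (C * A) := mul_assoc A C A
      _ = A * (A * C) := by rw [hCA]
      _ = (A * A) * C := (mul_assoc A A C).symm
  have hSSAA : S * S * (A * A) = 1 := by
    calc S * S * (A * A) = S * ((S * A) * A) := by simp only [mul_assoc]
      _ = 1 := by rw [hSA, one_mul, hSA]
  have key : C * (A * A) * C = A * A - M := by
    have h1 : (C * C) * (A * A) = A * A - M := by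
      have h2 : C * C = 1 - M * (S * S) := by
        rw [eq_sub_iff_add_eq]; exact hid
      rw [h2, sub_mul, one_mul, mul_assoc, hSSAA, mul_one]
    calc C * (A * A) * C = C * ((A * A) * C) := by rw [mul_assoc]
      _ = C * (C * (A * A)) := by rw [hcomm]
      _ = (C * C) * (A * A) := by rw [mul_assoc]
      _ = A * A - M := h1
  -- sequence facts
  have hx2 : x (n + 1 + 1) = (2 : ℝ) • C.mulVec (x (n + 1)) - x n := by
    have h := hrec (n + 1)
    have h2 : (n + 1 - 1 : ℤ) = n := by ring
    rw [h2] at h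
    have h3 : x (n + 1 + 1) = (x (n + 1 + 1) - (2 : ℝ) • C.mulVec (x (n + 1)) + x n)
        + ((2 : ℝ) • C.mulVec (x (n + 1)) - x n) := by abel
    rw [h, zero_add] at h3
    exact h3
  have hv1 : v (n + 1) = A.mulVec (C.mulVec (x (n + 1)) - x n) := by
    rw [hv (n + 1), hx2]
    congr 1
    have : (2 : ℝ) • C.mulVec (x (n + 1)) = C.mulVec (x (n + 1)) + C.mulVec (x (n + 1)) :=
      two_smul ℝ _
    rw [this]
    abel
  have hv0 : v n = A.mulVec (x (n + 1) - C.mulVec (x n)) := hv n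
  set z := x (n + 1) with hz
  set y := x n with hy
  have E1 : v (n + 1) ⬝ᵥ v (n + 1)
      = z ⬝ᵥ (C * (A * A) * C).mulVec z - z ⬝ᵥ (C * (A * A)).mulVec y
        - y ⬝ᵥ (C * (A * A)).mulVec z + y ⬝ᵥ (A * A).mulVec y := by
    rw [hv1]
    exact expand_quad A C hAt hCt hcomm z y
  have E0 : v n ⬝ᵥ v n
      = y ⬝ᵥ (C * (A * A) * C).mulVec y - y ⬝ᵥ (C * (A * A)).mulVec z
        - z ⬝ᵥ (C * (A * A)).mulVec y + z ⬝ᵥ (A * A).mulVec z := by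
    have hneg : x (n + 1) - C.mulVec (x n) = -(C.mulVec y - z) := by
      rw [← hz, ← hy]; abel
    rw [hv0, hneg, Matrix.mulVec_neg, neg_dotProduct, dotProduct_neg, neg_neg]
    exact expand_quad A C hAt hCt hcomm y z
  have keyz : z ⬝ᵥ (C * (A * A) * C).mulVec z = z ⬝ᵥ (A * A).mulVec z - z ⬝ᵥ M.mulVec z := by
    rw [key, Matrix.sub_mulVec, dotProduct_sub]
  have keyy : y ⬝ᵥ (C * (A * A) * C).mulVec y = y ⬝ᵥ (A * A).mulVec y - y ⬝ᵥ M.mulVec y := by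
    rw [key, Matrix.sub_mulVec, dotProduct_sub]
  rw [E1, E0, keyz, keyy]
  ring
end

section
/- Let Ω be a symmetric invertible real N×N matrix, a ∈ ℝᴺ, and let δₙ be a symmetric invertible real N×N matrix commuting with Ω² (e.g. δₙ = 2Ω⁻¹tan(Ωεₙ/2)). Suppose the pairs (xₙ, vₙ), (x_{n+1}, v_{n+1}) in ℝᴺ × ℝᴺ satisfy δₙ⁻¹·(x_{n+1} − xₙ) = ½·(v_{n+1} + vₙ) and δₙ⁻¹·(v_{n+1} − vₙ) = −½·Ω²·(x_{n+1} + xₙ) + a. Then Iₙ := ½·|vₙ|² + ½·⟨xₙ, Ω²·xₙ⟩ − ⟨a, xₙ⟩ satisfies I_{n+1} = Iₙ, where ⟨·,·⟩ is the Euclidean inner product on ℝᴺ and |v|² = ⟨v, v⟩. -/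
open Matrix

/-- Energy conservation for the implicit (discrete-gradient) form of the exact
discretization of the multidimensional driven harmonic oscillator `x'' + Ω²x = a`:
if `Ω` and `δ` are symmetric invertible matrices with `δ` commuting with `Ω²`, and
`δ⁻¹(x₁ - x₀) = ½(v₁ + v₀)`, `δ⁻¹(v₁ - v₀) = -½Ω²(x₁ + x₀) + a`, then
`I = ½|v|² + ½⟨x, Ω²x⟩ - ⟨a, x⟩` is preserved. -/
theorem discrete_energy_multidimensional_driven
    {N : ℕ} (Ω δ : Matrix (Fin N) (Fin N) ℝ)
    (hΩsym : Ωᵀ = Ω) (hΩinv : IsUnit Ω.det)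
    (hδsym : δᵀ = δ) (hδinv : IsUnit δ.det)
    (hcomm : δ * Ω ^ 2 = Ω ^ 2 * δ)
    (a x₀ v₀ x₁ v₁ : Fin N → ℝ)
    (h1 : δ⁻¹.mulVec (x₁ - x₀) = (1 / 2 : ℝ) • (v₁ + v₀))
    (h2 : δ⁻¹.mulVec (v₁ - v₀) = -((1 / 2 : ℝ) • (Ω ^ 2).mulVec (x₁ + x₀)) + a) :
    (1 / 2 : ℝ) * (v₁ ⬝ᵥ v₁) + (1 / 2 : ℝ) * (x₁ ⬝ᵥ (Ω ^ 2).mulVec x₁) - a ⬝ᵥ x₁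
      = (1 / 2 : ℝ) * (v₀ ⬝ᵥ v₀) + (1 / 2 : ℝ) * (x₀ ⬝ᵥ (Ω ^ 2).mulVec x₀) - a ⬝ᵥ x₀ := by
  set M := Ω ^ 2 with hM
  have hMsym : Mᵀ = M := by
    rw [hM, pow_two, transpose_mul, hΩsym, ← pow_two]
  -- symmetric bilinear form lemma
  have hsym : ∀ (A : Matrix (Fin N) (Fin N) ℝ), Aᵀ = A →
      ∀ u w : Fin N → ℝ, u ⬝ᵥ A.mulVec w = w ⬝ᵥ A.mulVec u := by
    intro A hA u w
    rw [Matrix.dotProduct_mulVec, ← Matrix.mulVec_transpose, hA, dotProduct_comm]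
  -- recover the explicit equations by multiplying by δ
  have e1 : x₁ - x₀ = δ.mulVec ((1 / 2 : ℝ) • (v₁ + v₀)) := by
    have := congrArg δ.mulVec h1
    rwa [Matrix.mulVec_mulVec, Matrix.mul_nonsing_inv δ hδinv, Matrix.one_mulVec] at this
  have e2 : v₁ - v₀ = δ.mulVec (-((1 / 2 : ℝ) • M.mulVec (x₁ + x₀)) + a) := by
    have := congrArg δ.mulVec h2
    rwa [Matrix.mulVec_mulVec, Matrix.mul_nonsing_inv δ hδinv, Matrix.one_mulVec] at this
  -- difference identities
  have hv : v₁ ⬝ᵥ v₁ - v₀ ⬝ᵥ v₀ = (v₁ - v₀) ⬝ᵥ (v₁ + v₀) := by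
    have := dotProduct_comm v₀ v₁
    simp only [sub_dotProduct, dotProduct_add]
    linarith
  have hx : x₁ ⬝ᵥ M.mulVec x₁ - x₀ ⬝ᵥ M.mulVec x₀ = (x₁ - x₀) ⬝ᵥ M.mulVec (x₁ + x₀) := by
    have hs := hsym M hMsym x₀ x₁
    simp only [sub_dotProduct, Matrix.mulVec_add, dotProduct_add]
    linarith
  have ha : a ⬝ᵥ x₁ - a ⬝ᵥ x₀ = a ⬝ᵥ (x₁ - x₀) := by
    simp [dotProduct_sub]
  -- key cancellation
  have key : (1 / 2 : ℝ) * ((v₁ - v₀) ⬝ᵥ (v₁ + v₀))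
      + (1 / 2 : ℝ) * ((x₁ - x₀) ⬝ᵥ M.mulVec (x₁ + x₀))
      - a ⬝ᵥ (x₁ - x₀) = 0 := by
    rw [e1, e2]
    generalize v₁ + v₀ = S at *
    generalize x₁ + x₀ = X at *
    have c1 : a ⬝ᵥ δ.mulVec S = δ.mulVec a ⬝ᵥ S :=
      (hsym δ hδsym a S).trans (dotProduct_comm _ _)
    have c2 : δ.mulVec S ⬝ᵥ M.mulVec X
        = δ.mulVec (M.mulVec X) ⬝ᵥ S := by
      rw [dotProduct_comm, hsym δ hδsym (M.mulVec X) S,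
        dotProduct_comm]
    simp only [Matrix.mulVec_add, Matrix.mulVec_neg, Matrix.mulVec_smul,
      add_dotProduct, neg_dotProduct, smul_dotProduct,
      dotProduct_smul, smul_eq_mul]
    linarith [c1, c2]
  linarith [hv, hx, ha, key]
end
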